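/- arXiv:1104.3350 — 2 statements merged into one kernel-verified Lean document; each statement's English description precedes it below -/
import Mathlib

section
/- Let l be a prime number, A an abelian group, and B ⊆ A a subgroup with B + lA = A. Then for every integer n ≥ 1 and every b ∈ B with b ∈ l^n A, there exists c ∈ B with c ∈ l^{n+1} A and b − c ∈ l^n B. (Equivalently: the transition maps between the kernels of the surjections B/l^n B → A/l^n A are surjective.) -/
/-- Let `l` be a prime, `A` an abelian group, `B ⊆ A` a subgroup with
`B + lA = A`. Then for every `n ≥ 1` and every `b ∈ B` with `b ∈ l^n A`, there is `c ∈ B`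
with `c ∈ l^{n+1} A` and `b - c ∈ l^n B`.  (This is the surjectivity of the transition maps
between the kernels of the surjections `B/l^n B → A/l^n A`.) -/
theorem stmt5 (l : ℕ) (hl : l.Prime) (A : Type*) [AddCommGroup A] (B : AddSubgroup A)
    (hB : ∀ a : A, ∃ b ∈ B, ∃ c : A, a = b + l • c) (n : ℕ) (hn : 1 ≤ n)
    (b : A) (hbB : b ∈ B) (hbA : ∃ a : A, b = l ^ n • a) :
    ∃ c ∈ B, (∃ a : A, c = l ^ (n + 1) • a) ∧ ∃ b' ∈ B, b - c = l ^ n • b' := by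
  obtain ⟨a, ha⟩ := hbA
  obtain ⟨b₁, hb₁B, c, hc⟩ := hB a
  refine ⟨b - l ^ n • b₁, B.sub_mem hbB (B.nsmul_mem hb₁B _), ⟨c, ?_⟩, b₁, hb₁B, by abel⟩
  rw [ha, hc, smul_add, add_sub_cancel_left, smul_smul, pow_succ]
end

section
/- Let l be a prime number and ℤ_l the ring of l-adic integers. Let H be a ℤ_l-module with no l-torsion (l·x = 0 implies x = 0), let N' be a ℤ_l-module, and let β : H × N' → ℤ_l be a ℤ_l-bilinear map. Let N ⊆ H be a ℤ_l-submodule such that (i) for every x ∈ H there is an integer k ≥ 0 with l^k·x ∈ N, and (ii) the ℤ_l-linear map N → Hom_{ℤ_l}(N', ℤ_l) sending y to β(y, −) is bijective. Then N = H. -/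
/-- Let `l` be a prime, `H` a `ℤ_l`-module without `l`-torsion, `N'` a
`ℤ_l`-module, `β : H × N' → ℤ_l` a bilinear map, and `N ⊆ H` a submodule such that
(i) every element of `H` has a multiple by a power of `l` lying in `N`, and
(ii) `y ↦ β(y, -)` is a bijection from `N` onto `Hom_{ℤ_l}(N', ℤ_l)`.  Then `N = H`. -/
theorem stmt12 (l : ℕ) [Fact l.Prime] (H N' : Type*) [AddCommGroup H] [AddCommGroup N']
    [Module ℤ_[l] H] [Module ℤ_[l] N']
    (htf : ∀ x : H, (l : ℤ_[l]) • x = 0 → x = 0)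
    (β : H →ₗ[ℤ_[l]] N' →ₗ[ℤ_[l]] ℤ_[l])
    (N : Submodule ℤ_[l] H)
    (hi : ∀ x : H, ∃ k : ℕ, (l : ℤ_[l]) ^ k • x ∈ N)
    (hii : Function.Bijective (β ∘ₗ N.subtype)) :
    N = ⊤ := by
  have step : ∀ x : H, (l : ℤ_[l]) • x ∈ N → x ∈ N := by
    intro x hx
    obtain ⟨y, hy⟩ := hii.2 (β x)
    have h1 : (β ∘ₗ N.subtype) ⟨(l : ℤ_[l]) • x, hx⟩
        = (β ∘ₗ N.subtype) ((l : ℤ_[l]) • y) := by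
      rw [map_smul, hy]
      simp [map_smul]
    have h2 := hii.1 h1
    have h3 : (l : ℤ_[l]) • x = (l : ℤ_[l]) • (y : H) := by
      have := congrArg (Subtype.val) h2
      simpa using this
    have h4 : x = (y : H) := by
      have : (l : ℤ_[l]) • (x - (y : H)) = 0 := by
        rw [smul_sub, h3, sub_self]
      exact sub_eq_zero.mp (htf _ this)
    exact h4 ▸ y.2
  have key : ∀ (k : ℕ) (x : H), (l : ℤ_[l]) ^ k • x ∈ N → x ∈ N := by
    intro k
    induction k with
    | zero => intro x hx; simpa using hx
    | succ k ih =>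
      intro x hx
      apply step
      apply ih
      rw [smul_smul, ← pow_succ]
      exact hx
  rw [eq_top_iff]
  intro x _
  obtain ⟨k, hk⟩ := hi x
  exact key k x hk
end
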